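/- The subgroup of GL_2(ℤ) generated by the matrices A = [[1,0],[2,1]] and B = [[1,2],[0,1]] is a free group of rank 2; that is, the group homomorphism from the free group on two generators to GL_2(ℤ) sending the two generators to A and B, respectively, is injective. -/

import Mathlib

open Pointwise Matrix

namespace SanovAux

/-- Nonzero integer vectors. -/
abbrev V := {v : Fin 2 → ℤ // v ≠ 0}

instance : SMul (GL (Fin 2) ℤ) V where
  smul g v := ⟨(g : Matrix (Fin 2) (Fin 2) ℤ) *ᵥ v.1, by
    intro h
    apply v.2
    have h2 := congrArg (fun w => ((g⁻¹ : GL (Fin 2) ℤ) : Matrix (Fin 2) (Fin 2) ℤ) *ᵥ w) h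
    simp only [Matrix.mulVec_mulVec] at h2
    rw [show ((g⁻¹ : GL (Fin 2) ℤ) : Matrix (Fin 2) (Fin 2) ℤ) *
        ((g : GL (Fin 2) ℤ) : Matrix (Fin 2) (Fin 2) ℤ) = 1 from g.inv_mul] at h2
    simpa using h2⟩

lemma smul_coe (g : GL (Fin 2) ℤ) (v : V) :
    (g • v).1 = (g : Matrix (Fin 2) (Fin 2) ℤ) *ᵥ v.1 := rfl

instance : MulAction (GL (Fin 2) ℤ) V where
  one_smul v := Subtype.ext (by rw [smul_coe]; simp)
  mul_smul g h v := Subtype.ext (by simp only [smul_coe, Units.val_mul, Matrix.mulVec_mulVec])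

lemma mul2 (a b c d e f g h : ℤ) :
    !![a, b; c, d] * !![e, f; g, h] = !![a*e + b*g, a*f + b*h; c*e + d*g, c*f + d*h] := by
  ext i j
  fin_cases i <;> fin_cases j <;> simp [Matrix.mul_apply, Fin.sum_univ_two]

def Amat : GL (Fin 2) ℤ :=
  ⟨!![1, 0; 2, 1], !![1, 0; -2, 1],
    by rw [mul2]; norm_num [← Matrix.one_fin_two],
    by rw [mul2]; norm_num [← Matrix.one_fin_two]⟩

def Bmat : GL (Fin 2) ℤ :=
  ⟨!![1, 2; 0, 1], !![1, -2; 0, 1],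
    by rw [mul2]; norm_num [← Matrix.one_fin_two],
    by rw [mul2]; norm_num [← Matrix.one_fin_two]⟩

lemma mulVecA (v : Fin 2 → ℤ) : !![1, 0; 2, 1] *ᵥ v = ![v 0, 2 * v 0 + v 1] := by
  funext i
  fin_cases i <;>
    simp [Matrix.mulVec, dotProduct, Fin.sum_univ_two] <;> ring

lemma mulVecB (v : Fin 2 → ℤ) : !![1, 2; 0, 1] *ᵥ v = ![v 0 + 2 * v 1, v 1] := by
  funext i
  fin_cases i <;>
    simp [Matrix.mulVec, dotProduct, Fin.sum_univ_two] <;> ring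

/-- The ping set for `A`. -/
def S : Set V := {v | |v.1 0| ≤ |v.1 1| ∧ 0 ≤ v.1 0 * v.1 1}

/-- The ping set for `B`. -/
def T : Set V := {v | |v.1 1| < |v.1 0| ∧ 0 ≤ v.1 0 * v.1 1}

lemma memA_smul (v : V) :
    Amat • v ∈ S ↔ (|v.1 0| ≤ |2 * v.1 0 + v.1 1| ∧ 0 ≤ v.1 0 * (2 * v.1 0 + v.1 1)) := by
  show (_ ∧ _) ↔ _
  rw [show (Amat • v).1 = ![v.1 0, 2 * v.1 0 + v.1 1] by rw [smul_coe]; exact mulVecA v.1]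
  simp

lemma memB_smul (v : V) :
    Bmat • v ∈ T ↔ (|v.1 1| < |v.1 0 + 2 * v.1 1| ∧ 0 ≤ (v.1 0 + 2 * v.1 1) * v.1 1) := by
  show (_ ∧ _) ↔ _
  rw [show (Bmat • v).1 = ![v.1 0 + 2 * v.1 1, v.1 1] by rw [smul_coe]; exact mulVecB v.1]
  simp

lemma vne (v : V) : ¬(v.1 0 = 0 ∧ v.1 1 = 0) := by
  rintro ⟨h0, h1⟩
  apply v.2
  funext i
  fin_cases i <;> assumption

/-- Arithmetic key lemma for `A`. -/
lemma keyA (x y : ℤ) (h : ¬(x = 0 ∧ y = 0)) (hs : 0 ≤ x * y ∨ |y| ≤ |x|) :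
    |x| ≤ |2 * x + y| ∧ 0 ≤ x * (2 * x + y) := by
  have hs' : (0 ≤ x ∧ 0 ≤ y) ∨ (x ≤ 0 ∧ y ≤ 0) ∨ |y| ≤ |x| := by
    rcases hs with hs | hs
    · rcases mul_nonneg_iff.mp hs with h1 | h1
      exacts [Or.inl h1, Or.inr (Or.inl h1)]
    · exact Or.inr (Or.inr hs)
  constructor
  · simp only [Int.abs_eq_natAbs] at hs' ⊢
    omega
  · rcases hs' with ⟨h1, h2⟩ | ⟨h1, h2⟩ | h1
    · nlinarith
    · nlinarith
    · rcases le_or_gt 0 x with hx | hx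
      · have := (abs_le.mp (h1.trans_eq (abs_of_nonneg hx))).1
        nlinarith
      · have := (abs_le.mp (h1.trans_eq (abs_of_nonpos hx.le))).2
        nlinarith

/-- Arithmetic key lemma for `B`. -/
lemma keyB (x y : ℤ) (h : ¬(x = 0 ∧ y = 0)) (hs : 0 ≤ x * y ∨ |x| < |y|) :
    |y| < |x + 2 * y| ∧ 0 ≤ (x + 2 * y) * y := by
  have hs' : (0 ≤ x ∧ 0 ≤ y) ∨ (x ≤ 0 ∧ y ≤ 0) ∨ |x| < |y| := by
    rcases hs with hs | hs
    · rcases mul_nonneg_iff.mp hs with h1 | h1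
      exacts [Or.inl h1, Or.inr (Or.inl h1)]
    · exact Or.inr (Or.inr hs)
  constructor
  · simp only [Int.abs_eq_natAbs] at hs' ⊢
    omega
  · rcases hs' with ⟨h1, h2⟩ | ⟨h1, h2⟩ | h1
    · nlinarith
    · nlinarith
    · rcases le_or_gt 0 y with hy | hy
      · have := (abs_lt.mp (h1.trans_eq (abs_of_nonneg hy))).1
        nlinarith
      · have := (abs_lt.mp (h1.trans_eq (abs_of_nonpos hy.le))).2
        nlinarith

end SanovAux

theorem sanov_free_subgroup_GL2_int :
    ∃ A B : GL (Fin 2) ℤ,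
      (A : Matrix (Fin 2) (Fin 2) ℤ) = !![1, 0; 2, 1] ∧
      (B : Matrix (Fin 2) (Fin 2) ℤ) = !![1, 2; 0, 1] ∧
      Function.Injective (FreeGroup.lift fun t : Bool => if t then A else B) := by
  classical
  refine ⟨SanovAux.Amat, SanovAux.Bmat, rfl, rfl, ?_⟩
  set a : Bool → GL (Fin 2) ℤ := fun t => if t then SanovAux.Amat else SanovAux.Bmat with ha
  set X : Bool → Set SanovAux.V := fun b => if b then SanovAux.S else SanovAux.T with hXdef
  set Y : Bool → Set SanovAux.V := fun b => {v | a b • v ∉ X b} with hYdef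
  have memS : ∀ v : SanovAux.V, (0 ≤ v.1 0 * v.1 1 ∨ |v.1 1| ≤ |v.1 0|) →
      SanovAux.Amat • v ∈ SanovAux.S := by
    intro v hv
    rw [SanovAux.memA_smul]
    exact SanovAux.keyA _ _ (SanovAux.vne v) hv
  have memT : ∀ v : SanovAux.V, (0 ≤ v.1 0 * v.1 1 ∨ |v.1 0| < |v.1 1|) →
      SanovAux.Bmat • v ∈ SanovAux.T := by
    intro v hv
    rw [SanovAux.memB_smul]
    exact SanovAux.keyB _ _ (SanovAux.vne v) hv
  apply FreeGroup.injective_lift_of_ping_pong a X Y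
  · -- X nonempty
    intro i
    cases i
    · exact ⟨⟨![1, 0], by simp [Function.ne_iff]⟩, by norm_num [hXdef, SanovAux.T]⟩
    · exact ⟨⟨![0, 1], by simp [Function.ne_iff]⟩, by norm_num [hXdef, SanovAux.S]⟩
  · -- X pairwise disjoint
    have hd : Disjoint SanovAux.S SanovAux.T := by
      rw [Set.disjoint_left]
      rintro v ⟨h1, _⟩ ⟨h2, _⟩
      omega
    intro i j hij
    cases i <;> cases j <;> simp_all [hXdef]
    exacts [hd.symm, hd]
  · -- Y pairwise disjoint
    have hd : Disjoint (Y true) (Y false) := by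
      rw [Set.disjoint_left]
      intro v hvA hvB
      simp only [hYdef, ha, Set.mem_setOf_eq, if_true, if_false, hXdef] at hvA hvB
      rcases le_or_gt 0 (v.1 0 * v.1 1) with hs | hs
      · exact hvA (memS v (Or.inl hs))
      · rcases le_or_gt (|v.1 1|) (|v.1 0|) with h | h
        · exact hvA (memS v (Or.inr h))
        · exact hvB (memT v (Or.inr h))
    intro i j hij
    cases i <;> cases j <;>
      first
        | exact absurd rfl hij
        | exact hd
        | exact hd.symm
  · -- X i disjoint Y j
    intro i j
    rw [Set.disjoint_left]
    intro v hvX hvY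
    apply hvY
    have hprod : 0 ≤ v.1 0 * v.1 1 := by
      cases i <;>
        simp only [hXdef, if_true, if_false, SanovAux.S, SanovAux.T,
          Set.mem_setOf_eq] at hvX <;>
        exact hvX.2
    simp only [hYdef, ha]
    cases j
    · simpa [hXdef] using memT v (Or.inl hprod)
    · simpa [hXdef] using memS v (Or.inl hprod)
  · -- a i • (Y i)ᶜ ⊆ X i
    intro i w hw
    rw [Set.mem_smul_set] at hw
    obtain ⟨v, hv, rfl⟩ := hw
    simp only [hYdef, Set.mem_compl_iff, Set.mem_setOf_eq, not_not] at hv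
    exact hv
  · -- (a i)⁻¹ • (X i)ᶜ ⊆ Y i
    intro i w hw
    rw [Set.mem_smul_set] at hw
    obtain ⟨v, hv, rfl⟩ := hw
    simp only [hYdef, Set.mem_setOf_eq, Pi.inv_apply, smul_inv_smul]
    exact hv
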